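/- Let U = (P ∪ Q, Ẽ) be an undirected bipartite graph and let (G,σ) be the 2-colored digraph constructed from U as follows: V(G) = P ∪ Q ∪ R ∪ {b} ∪ {w} where R = {r1,…,r|Q|} is a copy of Q = {q1,…,q|Q|}; all vertices of P, all vertices of R, and b are colored black, and all vertices of Q and w are colored white; the arcs are (q_i,r_i) and (r_i,q_i) for 1 ≤ i ≤ |Q|, (p_i,w) for every p_i ∈ P, (w,b) and (b,w), and (p,q) for every edge {p,q} ∈ Ẽ. If F is a minimum-sized arc completion set such that (G+F,σ) is a best match graph, then F ⊆ P×Q. -/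

import Mathlib

/-- A rooted (phylogenetic) tree on leaf set `V`, encoded by its hierarchy of
clusters `L(T(v))`, `v ∈ V(T)`: a rooted tree on leaf set `V` corresponds
exactly to a family of nonempty, pairwise compatible subsets of `V` containing
all singletons and `V` itself.  Together with a coloring `σ : V → M` this is a
leaf-colored tree. -/
structure PhyloTree (V : Type) where
  clusters : Set (Set V)
  compat : ∀ p ∈ clusters, ∀ q ∈ clusters, p ⊆ q ∨ q ⊆ p ∨ p ∩ q = ∅
  singleton_mem : ∀ v : V, {v} ∈ clusters
  univ_mem : Set.univ ∈ clusters
  nonempty_mem : ∀ p ∈ clusters, p.Nonempty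

namespace PhyloTree

variable {V M : Type}

/-- The cluster `L(T(lca(x,y)))` of the last common ancestor of `x` and `y`;
for inner vertices `u,v` of a tree one has `u ⪯_T v ↔ L(T(u)) ⊆ L(T(v))`. -/
def lcaSet (T : PhyloTree V) (x y : V) : Set V :=
  ⋂₀ {p : Set V | p ∈ T.clusters ∧ x ∈ p ∧ y ∈ p}

/-- `T` displays the triple `xy|z`, i.e. `lca(x,y) ≺ lca(x,z) = lca(y,z)`. -/
def Displays (T : PhyloTree V) (x y z : V) : Prop :=
  T.lcaSet x y ⊂ T.lcaSet x z ∧ T.lcaSet x z = T.lcaSet y z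

/-- `y` is a best match of `x` in the leaf-colored tree `(T,σ)`. -/
def BestMatch (T : PhyloTree V) (σ : V → M) (x y : V) : Prop :=
  σ x ≠ σ y ∧ ∀ y' : V, σ y' = σ y → T.lcaSet x y ⊆ T.lcaSet x y'

end PhyloTree

variable {V M : Type}

/-- `(T,σ)` explains `(G,σ)`, i.e. `(G,σ) = G(T,σ)`. -/
def Explains (T : PhyloTree V) (σ : V → M) (G : V → V → Prop) : Prop :=
  ∀ x y : V, G x y ↔ T.BestMatch σ x y

/-- `(G,σ)` is a best match graph. -/
def IsBMG (G : V → V → Prop) (σ : V → M) : Prop :=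
  ∃ T : PhyloTree V, Explains T σ G

/-- The triple `xy|y'` is informative for `(G,σ)`. -/
def InformativeTriple (G : V → V → Prop) (σ : V → M) (x y y' : V) : Prop :=
  x ≠ y ∧ x ≠ y' ∧ y ≠ y' ∧ σ x ≠ σ y ∧ σ y = σ y' ∧ G x y ∧ ¬ G x y'

/-- The triple `xy|y'` is forbidden for `(G,σ)`. -/
def ForbiddenTriple (G : V → V → Prop) (σ : V → M) (x y y' : V) : Prop :=
  x ≠ y ∧ x ≠ y' ∧ y ≠ y' ∧ σ x ≠ σ y ∧ σ y = σ y' ∧ G x y ∧ G x y'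

/-- `(G,σ)` is sf-colored: `σ` is proper and every vertex has an out-neighbor
of every color present in the graph other than its own. -/
def SfColored (G : V → V → Prop) (σ : V → M) : Prop :=
  (∀ x y : V, G x y → σ x ≠ σ y) ∧
  ∀ (x : V) (s : M), (∃ v : V, σ v = s) → s ≠ σ x → ∃ y : V, σ y = s ∧ G x y

/-- Vertex set of the graph constructed in the reduction from Chain Graph
Completion: `P ∪ Q ∪ R ∪ {b} ∪ {w}`, where `R` is a copy of `Q`, the vertex
`b = Sum.inr (Sum.inr (Sum.inr true))` and `w = Sum.inr (Sum.inr (Sum.inr false))`. -/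
abbrev CGCVert (P Q : Type) : Type := P ⊕ Q ⊕ Q ⊕ Bool

/-- The coloring: vertices of `P`, of `R` and `b` are black (`true`); vertices
of `Q` and `w` are white (`false`). -/
def cgcColor {P Q : Type} : CGCVert P Q → Bool
  | Sum.inl _ => true
  | Sum.inr (Sum.inl _) => false
  | Sum.inr (Sum.inr (Sum.inl _)) => true
  | Sum.inr (Sum.inr (Sum.inr c)) => c

/-- Arcs of the reduction graph constructed from the bipartite graph with edge
relation `E0` between `P` and `Q`: `(q_i,r_i)`, `(r_i,q_i)`, `(p,w)` for every
`p ∈ P`, `(w,b)`, `(b,w)`, and `(p,q)` for every edge `{p,q}` of `U`. -/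
def cgcArcs {P Q : Type} (E0 : P → Q → Prop) : CGCVert P Q → CGCVert P Q → Prop
  | Sum.inl p, Sum.inr (Sum.inl q) => E0 p q
  | Sum.inl _, Sum.inr (Sum.inr (Sum.inr c)) => c = false
  | Sum.inr (Sum.inl q), Sum.inr (Sum.inr (Sum.inl q')) => q = q'
  | Sum.inr (Sum.inr (Sum.inl q')), Sum.inr (Sum.inl q) => q' = q
  | Sum.inr (Sum.inr (Sum.inr c)), Sum.inr (Sum.inr (Sum.inr c')) => c ≠ c'
  | _, _ => False

/-- The bipartite graph on `P ∪ Q` with edge relation `E0` is a chain graph: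
there is a linear order on `P` along which the neighborhoods are nested. -/
def IsChainGraph {P Q : Type} (E0 : P → Q → Prop) : Prop :=
  ∃ l : LinearOrder P, ∀ u v : P, l.le u v → ∀ q : Q, E0 u q → E0 v q

namespace CGCAux

open Classical

lemma mem_lcaSet_left {V : Type} (T : PhyloTree V) (x y : V) : x ∈ T.lcaSet x y :=
  fun _ hS => hS.2.1

lemma mem_lcaSet_right {V : Type} (T : PhyloTree V) (x y : V) : y ∈ T.lcaSet x y :=
  fun _ hS => hS.2.2

lemma lcaSet_subset {V : Type} (T : PhyloTree V) {x y : V} {S : Set V}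
    (hS : S ∈ T.clusters) (hx : x ∈ S) (hy : y ∈ S) : T.lcaSet x y ⊆ S :=
  Set.sInter_subset_of_mem ⟨hS, hx, hy⟩

lemma lcaSet_mem {V : Type} [Finite V] (T : PhyloTree V) (x y : V) :
    T.lcaSet x y ∈ T.clusters := by
  set Sfam : Set (Set V) := {p | p ∈ T.clusters ∧ x ∈ p ∧ y ∈ p} with hSfam
  have hne : Sfam.Nonempty := ⟨Set.univ, T.univ_mem, trivial, trivial⟩
  have hfin : Sfam.Finite := Set.toFinite _
  obtain ⟨a, haS, hmin⟩ : ∃ a ∈ Sfam, ∀ a' ∈ Sfam, id a' ≤ id a → id a = id a' := by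
    obtain ⟨a, ha⟩ := hfin.exists_minimal hne
    exact ⟨a, ha.1, fun b hb h => le_antisymm (ha.2 hb h) h⟩
  have hleast : ∀ b ∈ Sfam, a ⊆ b := by
    intro b hb
    rcases T.compat a haS.1 b hb.1 with h | h | h
    · exact h
    · exact le_of_eq (hmin b hb h)
    · exact absurd (Set.mem_inter haS.2.1 hb.2.1) (by simp [h])
  have heq : T.lcaSet x y = a :=
    subset_antisymm (Set.sInter_subset_of_mem haS) (Set.subset_sInter hleast)
  rw [heq]; exact haS.1

end CGCAux
namespace CGCAux

lemma nested_of_bmg {P Q : Type} [Fintype P] [Fintype Q]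
    (H : CGCVert P Q → CGCVert P Q → Prop)
    (hPW : ∀ p : P, H (Sum.inl p) (Sum.inr (Sum.inr (Sum.inr false))))
    (hbmg : IsBMG H cgcColor) :
    ∀ p p' : P,
      (∀ q : Q, H (Sum.inl p) (Sum.inr (Sum.inl q)) → H (Sum.inl p') (Sum.inr (Sum.inl q))) ∨
      (∀ q : Q, H (Sum.inl p') (Sum.inr (Sum.inl q)) → H (Sum.inl p) (Sum.inr (Sum.inl q))) := by
  obtain ⟨T, hT⟩ := hbmg
  set w : CGCVert P Q := Sum.inr (Sum.inr (Sum.inr false)) with hw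
  have key : ∀ p p' : P,
      T.lcaSet (Sum.inl p) w ⊆ T.lcaSet (Sum.inl p') w →
      ∀ q : Q, H (Sum.inl p) (Sum.inr (Sum.inl q)) → H (Sum.inl p') (Sum.inr (Sum.inl q)) := by
    intro p p' hAB q hq
    have hbmP : T.BestMatch cgcColor (Sum.inl p) (Sum.inr (Sum.inl q)) := (hT _ _).mp hq
    have hbmW : T.BestMatch cgcColor (Sum.inl p') w := (hT _ _).mp (hPW p')
    have hqA : (Sum.inr (Sum.inl q) : CGCVert P Q) ∈ T.lcaSet (Sum.inl p) w := by
      have h1 : T.lcaSet (Sum.inl p) (Sum.inr (Sum.inl q)) ⊆ T.lcaSet (Sum.inl p) w :=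
        hbmP.2 w rfl
      exact h1 (mem_lcaSet_right T _ _)
    have hqB : (Sum.inr (Sum.inl q) : CGCVert P Q) ∈ T.lcaSet (Sum.inl p') w := hAB hqA
    refine (hT _ _).mpr ⟨by simp [cgcColor], fun y' hy' => ?_⟩
    have h2 : T.lcaSet (Sum.inl p') (Sum.inr (Sum.inl q)) ⊆ T.lcaSet (Sum.inl p') w :=
      lcaSet_subset T (lcaSet_mem T _ _) (mem_lcaSet_left T _ _) hqB
    have h3 : T.lcaSet (Sum.inl p') w ⊆ T.lcaSet (Sum.inl p') y' := hbmW.2 y' hy'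
    exact h2.trans h3
  intro p p'
  have hwA : w ∈ T.lcaSet (Sum.inl p) w := mem_lcaSet_right T _ _
  have hwB : w ∈ T.lcaSet (Sum.inl p') w := mem_lcaSet_right T _ _
  rcases T.compat _ (lcaSet_mem T (Sum.inl p) w) _ (lcaSet_mem T (Sum.inl p') w) with h | h | h
  · exact Or.inl (key p p' h)
  · exact Or.inr (key p' p h)
  · exact absurd (Set.mem_inter hwA hwB) (by simp [h])

end CGCAux
namespace CGCAux

variable {P Q : Type}

/-- Cherry cluster `{q, r_q}`. -/
def cgcC (q0 : Q) : Set (CGCVert P Q) := fun x =>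
  match x with
  | Sum.inr (Sum.inl q) => q = q0
  | Sum.inr (Sum.inr (Sum.inl q)) => q = q0
  | _ => False

/-- Cherry cluster `{w, b}`. -/
def cgcWB : Set (CGCVert P Q) := fun x =>
  match x with
  | Sum.inr (Sum.inr (Sum.inr _)) => True
  | _ => False

/-- The cluster of the parent of `p`. -/
def cgcD (E1 : P → Q → Prop) (p : P) : Set (CGCVert P Q) := fun x =>
  match x with
  | Sum.inl p' => ∀ q, E1 p' q → E1 p q
  | Sum.inr (Sum.inl q) => E1 p q
  | Sum.inr (Sum.inr (Sum.inl q)) => E1 p q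
  | Sum.inr (Sum.inr (Sum.inr _)) => True

def cgcClusters (E1 : P → Q → Prop) : Set (Set (CGCVert P Q)) :=
  {S | (∃ v, S = {v}) ∨ (∃ q, S = cgcC q) ∨ S = cgcWB ∨ (∃ p, S = cgcD E1 p) ∨ S = Set.univ}

/-- The minimal non-singleton cluster containing a vertex. -/
def cgcMin (E1 : P → Q → Prop) : CGCVert P Q → Set (CGCVert P Q)
  | Sum.inl p => cgcD E1 p
  | Sum.inr (Sum.inl q) => cgcC q
  | Sum.inr (Sum.inr (Sum.inl q)) => cgcC q
  | Sum.inr (Sum.inr (Sum.inr _)) => cgcWB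

lemma cgcC_subset_D {E1 : P → Q → Prop} {p : P} {q : Q} (h : E1 p q) :
    cgcC q ⊆ cgcD E1 p := by
  rintro (p' | q' | q' | c) hx
  · exact hx.elim
  · exact (hx : q' = q) ▸ h
  · exact (hx : q' = q) ▸ h
  · exact hx.elim

lemma cgcWB_subset_D (E1 : P → Q → Prop) (p : P) : cgcWB ⊆ cgcD E1 p := by
  rintro (p' | q' | q' | c) hx
  · exact hx.elim
  · exact hx.elim
  · exact hx.elim
  · trivial

lemma cgcD_subset_D {E1 : P → Q → Prop} {p p' : P} (h : ∀ q, E1 p q → E1 p' q) :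
    cgcD E1 p ⊆ cgcD E1 p' := by
  rintro (p'' | q' | q' | c) hx
  · exact fun q hq => h q ((hx : ∀ q, E1 p'' q → E1 p q) q hq)
  · exact h _ hx
  · exact h _ hx
  · trivial

lemma mem_self_cgcMin (E1 : P → Q → Prop) (v : CGCVert P Q) : v ∈ cgcMin E1 v := by
  rcases v with p | q | q | c
  · exact fun q hq => hq
  · rfl
  · rfl
  · trivial

lemma cgcMin_mem (E1 : P → Q → Prop) (v : CGCVert P Q) : cgcMin E1 v ∈ cgcClusters E1 := by
  rcases v with p | q | q | c
  · exact Or.inr (Or.inr (Or.inr (Or.inl ⟨p, rfl⟩)))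
  · exact Or.inr (Or.inl ⟨q, rfl⟩)
  · exact Or.inr (Or.inl ⟨q, rfl⟩)
  · exact Or.inr (Or.inr (Or.inl rfl))

lemma singleton_compat {V : Type} (v : V) (S : Set V) : {v} ⊆ S ∨ {v} ∩ S = ∅ := by
  by_cases h : v ∈ S
  · exact Or.inl (Set.singleton_subset_iff.mpr h)
  · refine Or.inr (Set.eq_empty_iff_forall_notMem.mpr ?_)
    rintro x ⟨rfl, hx⟩
    exact h hx

lemma cgcClusters_compat (E1 : P → Q → Prop)
    (hnest : ∀ p p' : P, (∀ q, E1 p q → E1 p' q) ∨ (∀ q, E1 p' q → E1 p q)) :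
    ∀ A ∈ cgcClusters E1, ∀ B ∈ cgcClusters E1, A ⊆ B ∨ B ⊆ A ∨ A ∩ B = ∅ := by
  intro A hA B hB
  rcases hA with ⟨v, rfl⟩ | hA
  · rcases singleton_compat v B with h | h
    · exact Or.inl h
    · exact Or.inr (Or.inr h)
  rcases hB with ⟨v, rfl⟩ | hB
  · rcases singleton_compat v A with h | h
    · exact Or.inr (Or.inl h)
    · exact Or.inr (Or.inr (by rw [Set.inter_comm]; exact h))
  rcases hB with ⟨q0, rfl⟩ | hB
  · -- B = cgcC q0
    rcases hA with ⟨q1, rfl⟩ | hA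
    · by_cases h : q1 = q0
      · exact Or.inl (h ▸ subset_rfl)
      · refine Or.inr (Or.inr (Set.eq_empty_iff_forall_notMem.mpr ?_))
        rintro (p' | q' | q' | c) ⟨h1, h2⟩
        · exact h1.elim
        · exact h ((h1 : q' = q1) ▸ (h2 : q' = q0))
        · exact h ((h1 : q' = q1) ▸ (h2 : q' = q0))
        · exact h1.elim
    rcases hA with rfl | hA
    · refine Or.inr (Or.inr (Set.eq_empty_iff_forall_notMem.mpr ?_))
      rintro (p' | q' | q' | c) ⟨h1, h2⟩
      · exact h1.elim
      · exact h1.elim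
      · exact h1.elim
      · exact h2.elim
    rcases hA with ⟨p0, rfl⟩ | rfl
    · by_cases h : E1 p0 q0
      · exact Or.inr (Or.inl (cgcC_subset_D h))
      · refine Or.inr (Or.inr (Set.eq_empty_iff_forall_notMem.mpr ?_))
        rintro (p' | q' | q' | c) ⟨h1, h2⟩
        · exact h2.elim
        · exact h ((h2 : q' = q0) ▸ (h1 : E1 p0 q'))
        · exact h ((h2 : q' = q0) ▸ (h1 : E1 p0 q'))
        · exact h2.elim
    · exact Or.inr (Or.inl (Set.subset_univ _))
  rcases hB with rfl | hB
  · -- B = cgcWB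
    rcases hA with ⟨q1, rfl⟩ | hA
    · refine Or.inr (Or.inr (Set.eq_empty_iff_forall_notMem.mpr ?_))
      rintro (p' | q' | q' | c) ⟨h1, h2⟩
      · exact h1.elim
      · exact h2.elim
      · exact h2.elim
      · exact h1.elim
    rcases hA with rfl | hA
    · exact Or.inl subset_rfl
    rcases hA with ⟨p0, rfl⟩ | rfl
    · exact Or.inr (Or.inl (cgcWB_subset_D E1 p0))
    · exact Or.inr (Or.inl (Set.subset_univ _))
  rcases hB with ⟨p1, rfl⟩ | rfl
  · -- B = cgcD E1 p1
    rcases hA with ⟨q1, rfl⟩ | hA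
    · by_cases h : E1 p1 q1
      · exact Or.inl (cgcC_subset_D h)
      · refine Or.inr (Or.inr (Set.eq_empty_iff_forall_notMem.mpr ?_))
        rintro (p' | q' | q' | c) ⟨h1, h2⟩
        · exact h1.elim
        · exact h ((h1 : q' = q1) ▸ (h2 : E1 p1 q'))
        · exact h ((h1 : q' = q1) ▸ (h2 : E1 p1 q'))
        · exact h1.elim
    rcases hA with rfl | hA
    · exact Or.inl (cgcWB_subset_D E1 p1)
    rcases hA with ⟨p0, rfl⟩ | rfl
    · rcases hnest p0 p1 with h | h
      · exact Or.inl (cgcD_subset_D h)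
      · exact Or.inr (Or.inl (cgcD_subset_D h))
    · exact Or.inr (Or.inl (Set.subset_univ _))
  · exact Or.inl (Set.subset_univ _)

end CGCAux
namespace CGCAux

variable {P Q : Type}

lemma cgcMin_subset (E1 : P → Q → Prop) :
    ∀ S ∈ cgcClusters E1, ∀ v y : CGCVert P Q, v ∈ S → y ∈ S → y ≠ v →
      cgcMin E1 v ⊆ S := by
  rintro S hS v y hv hy hne
  rcases hS with ⟨u, rfl⟩ | hS
  · exact absurd ((hy : y = u).trans (hv : v = u).symm) hne
  rcases hS with ⟨q0, rfl⟩ | hS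
  · rcases v with p | q | q | c
    · exact hv.elim
    · exact ((hv : q = q0) ▸ subset_rfl : cgcMin E1 (Sum.inr (Sum.inl q)) ⊆ cgcC q0)
    · exact ((hv : q = q0) ▸ subset_rfl : cgcMin E1 (Sum.inr (Sum.inr (Sum.inl q))) ⊆ cgcC q0)
    · exact hv.elim
  rcases hS with rfl | hS
  · rcases v with p | q | q | c
    · exact hv.elim
    · exact hv.elim
    · exact hv.elim
    · exact subset_rfl
  rcases hS with ⟨p0, rfl⟩ | rfl
  · rcases v with p | q | q | c
    · exact cgcD_subset_D (hv : ∀ q, E1 p q → E1 p0 q)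
    · exact cgcC_subset_D (hv : E1 p0 q)
    · exact cgcC_subset_D (hv : E1 p0 q)
    · exact cgcWB_subset_D E1 p0
  · exact Set.subset_univ _

variable (E1 : P → Q → Prop)
variable (hnest : ∀ p p' : P, (∀ q, E1 p q → E1 p' q) ∨ (∀ q, E1 p' q → E1 p q))

/-- The tree explaining the CGC graph of a chain graph. -/
def cgcTree [Nonempty P] : PhyloTree (CGCVert P Q) where
  clusters := cgcClusters E1
  compat := cgcClusters_compat E1 hnest
  singleton_mem := fun v => Or.inl ⟨v, rfl⟩
  univ_mem := Or.inr (Or.inr (Or.inr (Or.inr rfl)))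
  nonempty_mem := by
    rintro S (⟨v, rfl⟩ | ⟨q0, rfl⟩ | rfl | ⟨p0, rfl⟩ | rfl)
    · exact ⟨v, rfl⟩
    · exact ⟨Sum.inr (Sum.inl q0), rfl⟩
    · exact ⟨Sum.inr (Sum.inr (Sum.inr true)), trivial⟩
    · exact ⟨Sum.inr (Sum.inr (Sum.inr true)), trivial⟩
    · exact ⟨Sum.inl (Classical.arbitrary P), trivial⟩

variable [Nonempty P]

lemma cgcTree_lca_eq {v y : CGCVert P Q} (hne : y ≠ v) (hy : y ∈ cgcMin E1 v) :
    (cgcTree E1 hnest).lcaSet v y = cgcMin E1 v := by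
  refine subset_antisymm (lcaSet_subset _ (cgcMin_mem E1 v) (mem_self_cgcMin E1 v) hy) ?_
  refine Set.subset_sInter ?_
  rintro S ⟨hS, hvS, hyS⟩
  exact cgcMin_subset E1 S hS v y hvS hyS hne

lemma cgcTree_lca_superset {v y : CGCVert P Q} (hne : y ≠ v) :
    cgcMin E1 v ⊆ (cgcTree E1 hnest).lcaSet v y := by
  refine Set.subset_sInter ?_
  rintro S ⟨hS, hvS, hyS⟩
  exact cgcMin_subset E1 S hS v y hvS hyS hne

end CGCAux
namespace CGCAux

variable {P Q : Type} (E1 : P → Q → Prop)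

lemma arc_facts : ∀ x y : CGCVert P Q, cgcArcs E1 x y →
    cgcColor x ≠ cgcColor y ∧ y ∈ cgcMin E1 x := by
  rintro (p | q | q | c) (p' | q' | q' | c') hxy
  · exact hxy.elim
  · exact ⟨by simp [cgcColor], hxy⟩
  · exact hxy.elim
  · refine ⟨?_, trivial⟩
    rw [(hxy : c' = false)]
    simp [cgcColor]
  · exact hxy.elim
  · exact hxy.elim
  · exact ⟨by simp [cgcColor], ((hxy : q = q').symm : q' = q)⟩
  · exact hxy.elim
  · exact hxy.elim
  · exact ⟨by simp [cgcColor], ((hxy : q = q').symm : q' = q)⟩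
  · exact hxy.elim
  · exact hxy.elim
  · exact hxy.elim
  · exact hxy.elim
  · exact hxy.elim
  · exact ⟨(hxy : c ≠ c'), trivial⟩

lemma mem_arc : ∀ x y : CGCVert P Q, y ∈ cgcMin E1 x →
    cgcColor x ≠ cgcColor y → cgcArcs E1 x y := by
  rintro (p | q | q | c) (p' | q' | q' | c') hmem hσ
  · exact absurd rfl hσ
  · exact hmem
  · exact absurd rfl hσ
  · cases c' with
    | false => rfl
    | true => exact absurd rfl hσ
  · exact hmem.elim
  · exact absurd rfl hσ
  · exact (hmem : q' = q).symm
  · exact hmem.elim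
  · exact hmem.elim
  · exact (hmem : q' = q).symm
  · exact absurd rfl hσ
  · exact hmem.elim
  · exact hmem.elim
  · exact hmem.elim
  · exact hmem.elim
  · exact (hσ : c ≠ c')

lemma exists_witness : ∀ x y : CGCVert P Q, cgcColor x ≠ cgcColor y →
    ∃ y₀ : CGCVert P Q, cgcColor y₀ = cgcColor y ∧ y₀ ∈ cgcMin E1 x ∧ y₀ ≠ x := by
  rintro (p | q | q | c) y hσ
  · refine ⟨Sum.inr (Sum.inr (Sum.inr false)), ?_, trivial, by simp⟩
    cases h : cgcColor y with
    | false => rfl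
    | true => exact absurd h.symm hσ
  · refine ⟨Sum.inr (Sum.inr (Sum.inl q)), ?_, rfl, by simp⟩
    cases h : cgcColor y with
    | false => exact absurd h.symm hσ
    | true => rfl
  · refine ⟨Sum.inr (Sum.inl q), ?_, rfl, by simp⟩
    cases h : cgcColor y with
    | false => rfl
    | true => exact absurd h.symm hσ
  · cases c with
    | false =>
      refine ⟨Sum.inr (Sum.inr (Sum.inr true)), ?_, trivial, by simp⟩
      cases h : cgcColor y with
      | false => exact absurd h.symm hσ
      | true => rfl
    | true =>
      refine ⟨Sum.inr (Sum.inr (Sum.inr false)), ?_, trivial, by simp⟩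
      cases h : cgcColor y with
      | false => rfl
      | true => exact absurd h.symm hσ

lemma bmg_of_nested [Nonempty P]
    (hnest : ∀ p p' : P, (∀ q, E1 p q → E1 p' q) ∨ (∀ q, E1 p' q → E1 p q)) :
    IsBMG (cgcArcs E1) cgcColor := by
  refine ⟨cgcTree E1 hnest, fun x y => ?_⟩
  constructor
  · intro hxy
    obtain ⟨hσ, hmem⟩ := arc_facts E1 x y hxy
    have hyx : y ≠ x := fun h => hσ (congrArg cgcColor h).symm
    refine ⟨hσ, fun y' hy' => ?_⟩
    have hy'x : y' ≠ x := fun h => hσ ((congrArg cgcColor h).symm.trans hy')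
    rw [cgcTree_lca_eq E1 hnest hyx hmem]
    exact cgcTree_lca_superset E1 hnest hy'x
  · rintro ⟨hσ, hall⟩
    obtain ⟨y₀, hy₀c, hy₀m, hy₀x⟩ := exists_witness E1 x y hσ
    have hsub := hall y₀ hy₀c
    rw [cgcTree_lca_eq E1 hnest hy₀x hy₀m] at hsub
    exact mem_arc E1 x y (hsub (mem_lcaSet_right _ _ _)) hσ

end CGCAux
/-- Every minimum-sized arc completion set `F` turning the CGC
reduction graph into a BMG only contains arcs from `P` to `Q`. -/
theorem cgc_minimum_completion_subset_PQ {P Q : Type}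
    [Fintype P] [Fintype Q] [Nonempty P] [Nonempty Q]
    (E0 : P → Q → Prop)
    (F : Finset (CGCVert P Q × CGCVert P Q))
    (hnonarc : ∀ p ∈ F, ¬ cgcArcs E0 p.1 p.2 ∧ p.1 ≠ p.2)
    (hbmg : IsBMG (fun u v => cgcArcs E0 u v ∨ (u, v) ∈ F) cgcColor)
    (hmin : ∀ F' : Finset (CGCVert P Q × CGCVert P Q),
      (∀ p ∈ F', ¬ cgcArcs E0 p.1 p.2 ∧ p.1 ≠ p.2) →
      IsBMG (fun u v => cgcArcs E0 u v ∨ (u, v) ∈ F') cgcColor →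
      F.card ≤ F'.card) :
    ∀ p ∈ F, ∃ (pp : P) (qq : Q), p = (Sum.inl pp, Sum.inr (Sum.inl qq)) := by
  classical
  have hnestH := CGCAux.nested_of_bmg (fun u v => cgcArcs E0 u v ∨ (u, v) ∈ F)
      (fun p => Or.inl rfl) hbmg
  have hnest : ∀ p p' : P,
      (∀ q, (fun p q => E0 p q ∨ (Sum.inl p, Sum.inr (Sum.inl q)) ∈ F) p q →
        (fun p q => E0 p q ∨ (Sum.inl p, Sum.inr (Sum.inl q)) ∈ F) p' q) ∨
      (∀ q, (fun p q => E0 p q ∨ (Sum.inl p, Sum.inr (Sum.inl q)) ∈ F) p' q →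
        (fun p q => E0 p q ∨ (Sum.inl p, Sum.inr (Sum.inl q)) ∈ F) p q) := hnestH
  have hbmg1 : IsBMG
      (cgcArcs (fun p q => E0 p q ∨ (Sum.inl p, Sum.inr (Sum.inl q)) ∈ F)) cgcColor :=
    CGCAux.bmg_of_nested _ hnest
  set F' : Finset (CGCVert P Q × CGCVert P Q) :=
    F.filter (fun e => ∃ (pp : P) (qq : Q), e = (Sum.inl pp, Sum.inr (Sum.inl qq))) with hF'
  have hiff : ∀ u v : CGCVert P Q, (cgcArcs E0 u v ∨ (u, v) ∈ F') ↔
      cgcArcs (fun p q => E0 p q ∨ (Sum.inl p, Sum.inr (Sum.inl q)) ∈ F) u v := by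
    rintro (p | q | q | c) (p' | q' | q' | c') <;>
      simp [hF', cgcArcs, Finset.mem_filter]
  have hbmgF' : IsBMG (fun u v => cgcArcs E0 u v ∨ (u, v) ∈ F') cgcColor := by
    obtain ⟨T, hT⟩ := hbmg1
    exact ⟨T, fun x y => (hiff x y).trans (hT x y)⟩
  have hsub : F' ⊆ F := Finset.filter_subset _ _
  have hcard := hmin F' (fun e he => hnonarc e (hsub he)) hbmgF'
  have hFF : F' = F := Finset.eq_of_subset_of_card_le hsub hcard
  intro e he
  have he' : e ∈ F' := hFF ▸ he
  exact (Finset.mem_filter.mp he').2
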